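/- Let h be a multiplicative function with 0 ≤ h(d) ≤ d for all positive integers d, and let H and J be as defined. Then: (a) H(p) = 0 for every prime p, and H(n) = 0 for every positive integer n that is not squarefull; (b) |H(p^α)| ≤ H(p²) for every prime p and every integer α ≥ 1; (c) |J(p^α, s)| ≤ 1 for every prime p, integer α ≥ 1, and positive integer s, and moreover |J(p^α, s)| ≤ h(p)/p whenever p ∤ s. -/
import Mathlib


open Finset
open scoped Classical

noncomputable section

lemma prod_single_ne_zero' {M : Type*} [CommMonoid M] (p α : ℕ) (hα : α ≠ 0) (g : ℕ → ℕ → M) :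
    (Finsupp.single p α).prod g = g p α := by
  rw [Finsupp.prod, Finsupp.support_single_ne_zero _ hα, Finset.prod_singleton,
    Finsupp.single_eq_same]

lemma pow_sum_le_one {x : ℝ} (hx0 : 0 ≤ x) (hx1 : x ≤ 1) {k : ℕ} (hk : 1 ≤ k) :
    x ^ k + (1 - x) ^ k ≤ 1 := by
  have h1 : x ^ k ≤ x := pow_le_of_le_one hx0 hx1 (by omega)
  have h2 : (1 - x) ^ k ≤ 1 - x := pow_le_of_le_one (by linarith) (by linarith) (by omega)
  linarith

/-- The multiplicative function `H` with
`H(p^α) = (h(p)/p)(1 − h(p)/p)^α + (−h(p)/p)^α (1 − h(p)/p)`. -/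
def Hfun (h : ℕ → ℝ) (n : ℕ) : ℝ :=
  n.factorization.prod fun p α =>
    h p / p * (1 - h p / p) ^ α + (-(h p / p)) ^ α * (1 - h p / p)

/-- The multiplicative function `J(·, s)` with `J(p^α, s) = (1 − h(p)/p)^α − (−h(p)/p)^α`
if `p ∣ s`, and `J(p^α, s) = (−h(p)/p)^α` if `p ∤ s`. -/
def Jfun (h : ℕ → ℝ) (r s : ℕ) : ℝ :=
  r.factorization.prod fun p α =>
    if p ∣ s then (1 - h p / p) ^ α - (-(h p / p)) ^ α else (-(h p / p)) ^ α

/-- `f_r(a)`: the completely multiplicative function of `r` with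
`f_p(a) = 1 − h(p)/p` if `p ∣ a` and `f_p(a) = −h(p)/p` if `p ∤ a`. -/
def ffun (h : ℕ → ℝ) (r a : ℕ) : ℝ :=
  r.factorization.prod fun p α => (if p ∣ a then 1 - h p / p else -(h p / p)) ^ α

/-- A positive integer is squarefull if `p² ∣ n` for every prime `p ∣ n`. -/
def Squarefull (n : ℕ) : Prop := ∀ p : ℕ, p.Prime → p ∣ n → p ^ 2 ∣ n

/-- The largest squarefree divisor (radical) of `n`. -/
def rad (n : ℕ) : ℕ := ∏ p ∈ n.primeFactors, p

lemma Hfun_pow (h : ℕ → ℝ) {p α : ℕ} (hp : p.Prime) (hα : α ≠ 0) :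
    Hfun h (p ^ α) =
      h p / p * (1 - h p / p) ^ α + (-(h p / p)) ^ α * (1 - h p / p) := by
  rw [Hfun, Nat.Prime.factorization_pow hp, prod_single_ne_zero' p α hα]

lemma Jfun_pow (h : ℕ → ℝ) {p α : ℕ} (hp : p.Prime) (hα : α ≠ 0) (s : ℕ) :
    Jfun h (p ^ α) s =
      if p ∣ s then (1 - h p / p) ^ α - (-(h p / p)) ^ α else (-(h p / p)) ^ α := by
  rw [Jfun, Nat.Prime.factorization_pow hp, prod_single_ne_zero' p α hα]

/-- **Lemma 4.3**: basic properties of `H` and `J`. -/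
theorem H_J_properties (h : ℕ → ℝ) (h_one : h 1 = 1)
    (h_mult : ∀ m n : ℕ, Nat.Coprime m n → h (m * n) = h m * h n)
    (h_nonneg : ∀ d : ℕ, 0 < d → 0 ≤ h d) (h_le : ∀ d : ℕ, 0 < d → h d ≤ (d : ℝ)) :
    -- (a) `H(p) = 0` and `H(n) = 0` unless `n` is squarefull
    (∀ p : ℕ, p.Prime → Hfun h p = 0) ∧
    (∀ n : ℕ, 0 < n → ¬ Squarefull n → Hfun h n = 0) ∧
    -- (b) `|H(p^α)| ≤ H(p²)`
    (∀ p α : ℕ, p.Prime → 1 ≤ α → |Hfun h (p ^ α)| ≤ Hfun h (p ^ 2)) ∧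
    -- (c) `|J(p^α, s)| ≤ 1`, and `|J(p^α, s)| ≤ h(p)/p` when `p ∤ s`
    (∀ p α s : ℕ, p.Prime → 1 ≤ α → 0 < s → |Jfun h (p ^ α) s| ≤ 1) ∧
    (∀ p α s : ℕ, p.Prime → 1 ≤ α → 0 < s → ¬ p ∣ s → |Jfun h (p ^ α) s| ≤ h p / p) := by
  have hx0 : ∀ p : ℕ, p.Prime → 0 ≤ h p / p := fun p hp =>
    div_nonneg (h_nonneg p hp.pos) (by positivity)
  have hx1 : ∀ p : ℕ, p.Prime → h p / p ≤ 1 := fun p hp =>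
    div_le_one_of_le₀ (h_le p hp.pos) (by exact_mod_cast hp.pos.le)
  refine ⟨?_, ?_, ?_, ?_, ?_⟩
  · -- H(p) = 0
    intro p hp
    have := Hfun_pow h hp one_ne_zero
    rw [pow_one] at this
    rw [this]; ring
  · -- H(n) = 0 if n not squarefull
    intro n hn hns
    rw [Squarefull] at hns
    push_neg at hns
    obtain ⟨p, hp, hpn, hp2⟩ := hns
    have hfac : n.factorization p = 1 := by
      have h1 : 1 ≤ n.factorization p := by
        rw [← Nat.Prime.pow_dvd_iff_le_factorization hp hn.ne', pow_one]; exact hpn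
      have h2 : n.factorization p < 2 := by
        by_contra hc
        exact hp2 ((Nat.Prime.pow_dvd_iff_le_factorization hp hn.ne').mpr (by omega))
      omega
    have hmem : p ∈ n.factorization.support := by
      rw [Finsupp.mem_support_iff, hfac]; exact one_ne_zero
    rw [Hfun, Finsupp.prod]
    apply Finset.prod_eq_zero hmem
    rw [hfac]; ring
  · -- (b)
    intro p α hp hα
    set x := h p / p with hxdef
    have h0 := hx0 p hp
    have h1 := hx1 p hp
    have hH2 : Hfun h (p ^ 2) = x * (1 - x) := by
      rw [Hfun_pow h hp two_ne_zero]; ring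
    rcases Nat.eq_or_lt_of_le hα with heq | hlt
    · have : Hfun h (p ^ α) = 0 := by
        rw [Hfun_pow h hp (by omega), ← heq, pow_one]; ring
      rw [this, abs_zero, hH2]; nlinarith
    · -- α ≥ 2
      rw [Hfun_pow h hp (by omega), hH2]
      have hk : 1 ≤ α - 1 := by omega
      have key : x ^ (α - 1) + (1 - x) ^ (α - 1) ≤ 1 := pow_sum_le_one h0 h1 hk
      have hαe : α = (α - 1) + 1 := by omega
      calc |x * (1 - x) ^ α + (-x) ^ α * (1 - x)|
          ≤ |x * (1 - x) ^ α| + |(-x) ^ α * (1 - x)| := abs_add_le _ _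
        _ = x * (1 - x) ^ α + x ^ α * (1 - x) := by
            rw [abs_mul, abs_mul, abs_pow, abs_pow, abs_neg]
            rw [abs_of_nonneg h0, abs_of_nonneg (by linarith : (0:ℝ) ≤ 1 - x)]
        _ = x * (1 - x) * ((1 - x) ^ (α - 1) + x ^ (α - 1)) := by
            have e1 := pow_succ (1 - x) (α - 1)
            have e2 := pow_succ x (α - 1)
            rw [← hαe] at e1 e2
            rw [e1, e2]; ring
        _ ≤ x * (1 - x) * 1 := by
            apply mul_le_mul_of_nonneg_left (by linarith) (by nlinarith)
        _ = x * (1 - x) := by ring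
  · -- |J| ≤ 1
    intro p α s hp hα hs
    set x := h p / p with hxdef
    have h0 := hx0 p hp
    have h1 := hx1 p hp
    rw [Jfun_pow h hp (by omega)]
    have hx : x ^ α ≤ x := pow_le_of_le_one h0 h1 (by omega)
    have hx' : (1 - x) ^ α ≤ 1 - x := pow_le_of_le_one (by linarith) (by linarith) (by omega)
    have hxp : (0:ℝ) ≤ x ^ α := by positivity
    have hxp' : (0:ℝ) ≤ (1 - x) ^ α := pow_nonneg (by linarith) _
    split_ifs with hd
    · calc |(1 - x) ^ α - (-x) ^ α| ≤ |(1 - x) ^ α| + |(-x) ^ α| := abs_sub _ _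
        _ = (1 - x) ^ α + x ^ α := by
            rw [abs_pow, abs_pow, abs_neg, abs_of_nonneg h0,
              abs_of_nonneg (by linarith : (0:ℝ) ≤ 1 - x)]
        _ ≤ 1 := by linarith
    · rw [abs_pow, abs_neg, abs_of_nonneg h0]
      calc x ^ α ≤ x := hx
        _ ≤ 1 := h1
  · -- |J| ≤ h p / p when p ∤ s
    intro p α s hp hα hs hd
    have h0 := hx0 p hp
    have h1 := hx1 p hp
    rw [Jfun_pow h hp (by omega), if_neg hd, abs_pow, abs_neg, abs_of_nonneg h0]
    exact pow_le_of_le_one h0 h1 (by omega)
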